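/- arXiv:1110.6668 — 3 statements merged into one kernel-verified Lean document; each statement's English description precedes it below -/
import Mathlib

section
/- Every matroid M has a weakly round restriction N such that ε(N) ≥ φ^{r(N) - r(M)}·ε(M), where φ = (1+√5)/2 and ε denotes the number of points (rank-1 flats). -/
open Matroid Set

namespace GrowthRate

variable {α : Type*}

/-- The rank of a set in a matroid: the supremum of cardinalities of independent subsets. -/
noncomputable def eRk (M : Matroid α) (X : Set α) : ℕ∞ :=
  ⨆ I ∈ {I : Set α | M.Indep I ∧ I ⊆ X}, I.encard

/-- The rank of a matroid. -/
noncomputable def eRank (M : Matroid α) : ℕ∞ := eRk M M.E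

/-- Rank as a natural number (for finite matroids). -/
noncomputable def rk (M : Matroid α) (X : Set α) : ℕ := (eRk M X).toNat

/-- Rank of a matroid as a natural number. -/
noncomputable def rank (M : Matroid α) : ℕ := (eRank M).toNat

/-- Deletion of a set of elements. -/
noncomputable def delete (M : Matroid α) (D : Set α) : Matroid α := M ↾ (M.E \ D)

/-- Contraction of a set of elements, defined via duality. -/
noncomputable def contract (M : Matroid α) (C : Set α) : Matroid α := (delete M✶ C)✶

/-- `N` is a minor of `M` if it is obtained by a contraction followed by a deletion. -/
def IsMinor (N M : Matroid α) : Prop := ∃ C D : Set α, N = delete (contract M C) D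

/-- The number of points (rank-one flats) of `M` contained in `X`. -/
noncomputable def nPoints (M : Matroid α) (X : Set α) : ℕ :=
  {P : Set α | M.IsFlat P ∧ eRk M P = 1 ∧ P ⊆ X}.ncard

/-- `ε(M)`: the number of points (rank-one flats) of `M`. -/
noncomputable def eps (M : Matroid α) : ℕ := {P : Set α | M.IsFlat P ∧ eRk M P = 1}.ncard

/-- A matroid is simple if all singletons and pairs of ground elements are independent. -/
def Simple (M : Matroid α) : Prop :=
  ∀ e ∈ M.E, ∀ f ∈ M.E, M.Indep {e} ∧ (e ≠ f → M.Indep {e, f})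

/-- `M` has a `U_{2,m}`-minor: a minor that is simple of rank two with `m` elements. -/
def HasUnifLineMinor (M : Matroid α) (m : ℕ) : Prop :=
  ∃ N : Matroid α, IsMinor N M ∧ eRank N = 2 ∧ Simple N ∧ N.E.encard = m

/-- A matroid is weakly round if its ground set is not the union of a set of rank
at most `r(M)-2` and a set of rank at most `r(M)-1`. -/
def WeaklyRound (M : Matroid α) : Prop :=
  ¬ ∃ A B : Set α, A ∪ B = M.E ∧ eRk M A + 2 ≤ eRank M ∧ eRk M B + 1 ≤ eRank M

/-- `q` is a prime power. -/
def IsPrimePower (q : ℕ) : Prop := ∃ p n : ℕ, p.Prime ∧ 0 < n ∧ q = p ^ n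

/-- `M` is isomorphic to the projective geometry `PG(n-1, |F|)` over the finite field `F`:
there is a representation `f` of `M` by vectors in `F^n` such that distinct elements get
non-parallel vectors and every direction in `F^n` is represented. -/
def IsPG (M : Matroid α) (F : Type) [Field F] [Fintype F] (n : ℕ) : Prop :=
  ∃ f : α → (Fin n → F),
    (∀ I ⊆ M.E, (M.Indep I ↔ LinearIndependent F (fun x : I => f x))) ∧
    (∀ e ∈ M.E, ∀ e' ∈ M.E, ∀ c : F, f e' = c • f e → e = e') ∧
    (∀ v : Fin n → F, v ≠ 0 → ∃ e ∈ M.E, ∃ c : F, c ≠ 0 ∧ v = c • f e)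

/-- `M` is `(q,k)`-overfull. -/
noncomputable def Overfull (M : Matroid α) (q k : ℕ) : Prop :=
  ((q : ℚ) ^ (rank M + k) - 1) / ((q : ℚ) - 1)
      - (q : ℚ) * ((q : ℚ) ^ (2 * k) - 1) / ((q : ℚ) ^ 2 - 1) < (eps M : ℚ)

lemma eRk_restrict {M : Matroid α} {A X : Set α} (hA : A ⊆ X) :
    eRk (M ↾ X) A = eRk M A := by
  have hset : {I : Set α | (M ↾ X).Indep I ∧ I ⊆ A} = {I : Set α | M.Indep I ∧ I ⊆ A} := by
    ext I
    simp only [mem_setOf_eq, restrict_indep_iff]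
    exact ⟨fun h => ⟨h.1.1, h.2⟩, fun h => ⟨⟨h.1, h.2.trans hA⟩, h.2⟩⟩
  unfold eRk
  rw [hset]

lemma eRank_restrict (M : Matroid α) (X : Set α) : eRank (M ↾ X) = eRk M X := by
  unfold eRank
  rw [show (M ↾ X).E = X from rfl]
  exact eRk_restrict Subset.rfl

lemma rank_restrict (M : Matroid α) (X : Set α) : rank (M ↾ X) = rk M X := by
  unfold rank rk
  rw [eRank_restrict]

lemma eRk_basis' {M : Matroid α} {I X : Set α} (hI : M.IsBasis' I X) :
    eRk M X = I.encard := by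
  refine le_antisymm (iSup₂_le fun J hJ => ?_) ?_
  · obtain ⟨J', hJ', hsub⟩ := hJ.1.subset_isBasis'_of_subset hJ.2
    exact (encard_le_encard hsub).trans (hJ'.encard_eq_encard hI).le
  · exact le_iSup₂_of_le I (show M.Indep I ∧ I ⊆ X from ⟨hI.indep, hI.subset⟩) le_rfl

lemma eRk_le_ground_encard (M : Matroid α) (X : Set α) : eRk M X ≤ M.E.encard :=
  iSup₂_le fun _ hI => encard_le_encard hI.1.subset_ground

lemma eRk_ne_top (M : Matroid α) [M.Finite] (X : Set α) : eRk M X ≠ ⊤ :=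
  ((eRk_le_ground_encard M X).trans_lt M.ground_finite.encard_lt_top).ne

lemma eRk_empty (M : Matroid α) : eRk M ∅ = 0 := by
  refine le_antisymm (iSup₂_le fun I hI => ?_) zero_le
  rw [subset_empty_iff.mp hI.2]
  simp

lemma flat_closure (N : Matroid α) (X : Set α) : N.IsFlat (N.closure X) := by
  rw [Matroid.closure_def, sInter_eq_iInter]
  have : Nonempty {F : Set α // F ∈ {F | N.IsFlat F ∧ X ∩ N.E ⊆ F}} :=
    ⟨⟨N.E, N.ground_isFlat, inter_subset_right⟩⟩
  exact Matroid.IsFlat.iInter fun F => F.2.1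

lemma point_exists {N : Matroid α} {P : Set α} (hP : N.IsFlat P) (h1 : eRk N P = 1) :
    ∃ e, e ∈ P ∧ N.Indep {e} ∧ P = N.closure {e} := by
  obtain ⟨I, hI⟩ := N.exists_isBasis' P
  rw [eRk_basis' hI] at h1
  obtain ⟨e, rfl⟩ := encard_eq_one.mp h1
  have hB : N.IsBasis {e} P := hI.isBasis hP.subset_ground
  exact ⟨e, hB.subset rfl, hI.indep, (hB.closure_eq_closure.trans hP.closure).symm⟩

lemma restrict_closure_singleton {M : Matroid α} {Y : Set α} {e : α}
    (hY : Y ⊆ M.E) (heY : e ∈ Y) (he : M.Indep {e}) :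
    (M ↾ Y).closure {e} = M.closure {e} ∩ Y := by
  have heN : (M ↾ Y).Indep {e} := restrict_indep_iff.mpr ⟨he, singleton_subset_iff.mpr heY⟩
  ext f
  rw [mem_inter_iff, heN.mem_closure_iff', he.mem_closure_iff',
    show (M ↾ Y).E = Y from rfl, restrict_indep_iff]
  constructor
  · rintro ⟨hfY, h⟩
    exact ⟨⟨hY hfY, fun hind => h ⟨hind, insert_subset hfY (singleton_subset_iff.mpr heY)⟩⟩, hfY⟩
  · rintro ⟨⟨hfE, h⟩, hfY⟩
    exact ⟨hfY, fun hind => h hind.1⟩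

lemma points_restrict {M : Matroid α} {Y : Set α} (hY : Y ⊆ M.E) :
    {P : Set α | (M ↾ Y).IsFlat P ∧ eRk (M ↾ Y) P = 1}
      = (fun e => M.closure {e} ∩ Y) '' {e | e ∈ Y ∧ M.Indep {e}} := by
  ext P
  simp only [mem_setOf_eq, mem_image]
  constructor
  · rintro ⟨hP, h1⟩
    obtain ⟨e, heP, heI, hPe⟩ := point_exists hP h1
    have heY : e ∈ Y := hP.subset_ground heP
    obtain ⟨heM, -⟩ := restrict_indep_iff.mp heI
    exact ⟨e, ⟨heY, heM⟩, by rw [← restrict_closure_singleton hY heY heM, ← hPe]⟩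
  · rintro ⟨e, ⟨heY, heM⟩, rfl⟩
    rw [← restrict_closure_singleton hY heY heM]
    have heN : (M ↾ Y).Indep {e} := restrict_indep_iff.mpr ⟨heM, singleton_subset_iff.mpr heY⟩
    refine ⟨flat_closure _ _, ?_⟩
    rw [eRk_basis' heN.isBasis_closure.isBasis', encard_singleton]

lemma eps_restrict {M : Matroid α} {Y : Set α} (hY : Y ⊆ M.E) :
    eps (M ↾ Y) = ((fun e => M.closure {e} ∩ Y) '' {e | e ∈ Y ∧ M.Indep {e}}).ncard := by
  unfold eps
  rw [points_restrict hY]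

lemma closure_closure_inter {M : Matroid α} {e : α} {A : Set α}
    (heA : e ∈ A) (heE : e ∈ M.E) :
    M.closure (M.closure {e} ∩ A) = M.closure {e} := by
  refine subset_antisymm ?_ ?_
  · have h := M.closure_subset_closure (inter_subset_left (s := M.closure {e}) (t := A))
    rwa [closure_closure] at h
  · exact M.closure_subset_closure
      (singleton_subset_iff.mpr ⟨M.mem_closure_self e heE, heA⟩)

lemma eps_restrict_le {M : Matroid α} [M.Finite] {A X : Set α}
    (hX : X ⊆ M.E) (hA : A ⊆ X) :
    ((fun e => M.closure {e} ∩ X) '' {e | e ∈ A ∧ M.Indep {e}}).ncard ≤ eps (M ↾ A) := by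
  have hAE : A ⊆ M.E := hA.trans hX
  have hSA : {e | e ∈ A ∧ M.Indep {e}}.Finite :=
    (M.ground_finite.subset hAE).subset fun e he => he.1
  rw [eps_restrict hAE]
  have key : (fun e => M.closure {e} ∩ X) '' {e | e ∈ A ∧ M.Indep {e}}
      = (fun Q => M.closure Q ∩ X) '' ((fun e => M.closure {e} ∩ A) '' {e | e ∈ A ∧ M.Indep {e}}) := by
    rw [image_image]
    refine image_congr fun e he => ?_
    rw [closure_closure_inter he.1 (hAE he.1)]
  rw [key]
  exact ncard_image_le (hSA.image _)

lemma eps_union_le {M : Matroid α} [M.Finite] {A B X : Set α}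
    (hX : X ⊆ M.E) (hAB : A ∪ B = X) :
    eps (M ↾ X) ≤ eps (M ↾ A) + eps (M ↾ B) := by
  have hA : A ⊆ X := hAB ▸ subset_union_left
  have hB : B ⊆ X := hAB ▸ subset_union_right
  have hSX : {e | e ∈ X ∧ M.Indep {e}}
      = {e | e ∈ A ∧ M.Indep {e}} ∪ {e | e ∈ B ∧ M.Indep {e}} := by
    ext e
    simp only [mem_setOf_eq, mem_union, ← hAB]
    tauto
  rw [eps_restrict hX, hSX, image_union]
  exact (ncard_union_le _ _).trans
    (add_le_add (eps_restrict_le hX hA) (eps_restrict_le hX hB))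



/-- Every matroid `M` has a weakly round restriction `N` with
`ε(N) ≥ φ^(r(N) - r(M)) · ε(M)`, where `φ` is the golden ratio. -/
theorem statement_2 {α : Type*} (M : Matroid α) [M.Finite] :
    ∃ X : Set α, X ⊆ M.E ∧ WeaklyRound (M ↾ X) ∧
      ((1 + Real.sqrt 5) / 2) ^ ((rank (M ↾ X) : ℝ) - (rank M : ℝ)) * (eps M : ℝ)
        ≤ (eps (M ↾ X) : ℝ) := by
  set φ : ℝ := (1 + Real.sqrt 5) / 2 with hφdef
  have hs5 : (1:ℝ) ≤ Real.sqrt 5 := by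
    nlinarith [Real.sq_sqrt (show (0:ℝ) ≤ 5 by norm_num), Real.sqrt_nonneg 5]
  have hφ1 : (1:ℝ) ≤ φ := by rw [hφdef]; linarith
  have hφ0 : (0:ℝ) < φ := lt_of_lt_of_le one_pos hφ1
  have hφsq : φ ^ 2 = φ + 1 := by
    rw [hφdef]
    nlinarith [Real.sq_sqrt (show (0:ℝ) ≤ 5 by norm_num)]
  by_cases heps : eps M = 0
  · refine ⟨∅, empty_subset _, ?_, ?_⟩
    · rintro ⟨A, B, hAB, h2, h3⟩
      rw [eRank_restrict, eRk_empty] at h2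
      simp at h2
    · rw [heps]
      simp
  · have hEfin : M.E.Finite := M.ground_finite
    have hSfin : {Y : Set α | Y ⊆ M.E}.Finite := hEfin.finite_subsets
    set g : Set α → ℝ := fun Y => (eps (M ↾ Y) : ℝ) / φ ^ rank (M ↾ Y) with hg
    obtain ⟨X₁, hX₁S, hX₁max⟩ := Set.exists_max_image _ g hSfin ⟨M.E, Subset.rfl⟩
    set T : Set (Set α) := {Y | Y ⊆ M.E ∧ ∀ Z ⊆ M.E, g Z ≤ g Y} with hT
    have hTfin : T.Finite := hSfin.subset fun Y hY => hY.1
    obtain ⟨X₀, hX₀T, hX₀min⟩ := Set.exists_min_image T (fun Y => rank (M ↾ Y)) hTfin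
      ⟨X₁, hX₁S, fun Z hZ => hX₁max Z hZ⟩
    obtain ⟨hX₀E, hX₀max⟩ := hX₀T
    have hgE : g M.E = (eps M : ℝ) / φ ^ rank M := by
      rw [hg]
      simp only [M.restrict_ground_eq_self]
    have hg0 : 0 < g X₀ := by
      refine lt_of_lt_of_le ?_ (hX₀max M.E Subset.rfl)
      rw [hgE]
      exact div_pos (by exact_mod_cast Nat.pos_of_ne_zero heps) (pow_pos hφ0 _)
    refine ⟨X₀, hX₀E, ?_, ?_⟩
    · rintro ⟨A, B, hABu, h2, h3⟩
      rw [show (M ↾ X₀).E = X₀ from rfl] at hABu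
      have hA : A ⊆ X₀ := hABu ▸ subset_union_left
      have hB : B ⊆ X₀ := hABu ▸ subset_union_right
      rw [eRk_restrict hA, eRank_restrict] at h2
      rw [eRk_restrict hB, eRank_restrict] at h3
      have h2' : rk M A + 2 ≤ rk M X₀ := by
        rw [← ENat.coe_toNat (eRk_ne_top M A), ← ENat.coe_toNat (eRk_ne_top M X₀)] at h2
        exact_mod_cast h2
      have h3' : rk M B + 1 ≤ rk M X₀ := by
        rw [← ENat.coe_toNat (eRk_ne_top M B), ← ENat.coe_toNat (eRk_ne_top M X₀)] at h3
        exact_mod_cast h3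
      set rA := rank (M ↾ A) with hrA
      set rB := rank (M ↾ B) with hrB
      set rX := rank (M ↾ X₀) with hrX
      have hrA2 : rA + 2 ≤ rX := by rw [hrA, hrX, rank_restrict, rank_restrict]; exact h2'
      have hrB1 : rB + 1 ≤ rX := by rw [hrB, hrX, rank_restrict, rank_restrict]; exact h3'
      have hgA : g A < g X₀ := by
        rcases lt_or_eq_of_le (hX₀max A (hA.trans hX₀E)) with h | h
        · exact h
        · exfalso
          have hmem : A ∈ T := ⟨hA.trans hX₀E, fun Z hZ => h ▸ hX₀max Z hZ⟩
          have := hX₀min A hmem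
          omega
      have hcnt : eps (M ↾ X₀) ≤ eps (M ↾ A) + eps (M ↾ B) := eps_union_le hX₀E hABu
      have e1 : (eps (M ↾ A) : ℝ) < g X₀ * φ ^ rA := by
        have h := mul_lt_mul_of_pos_right hgA (pow_pos hφ0 rA)
        rwa [hg, div_mul_cancel₀ _ (ne_of_gt (pow_pos hφ0 rA))] at h
      have e2 : (eps (M ↾ B) : ℝ) ≤ g X₀ * φ ^ rB := by
        have h := mul_le_mul_of_nonneg_right (hX₀max B (hB.trans hX₀E)) (pow_pos hφ0 rB).le
        rwa [hg, div_mul_cancel₀ _ (ne_of_gt (pow_pos hφ0 rB))] at h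
      have e3 : (eps (M ↾ X₀) : ℝ) = g X₀ * φ ^ rX := by
        rw [hg, div_mul_cancel₀ _ (ne_of_gt (pow_pos hφ0 rX))]
      have hpowA : φ ^ rA * φ ^ 2 ≤ φ ^ rX := by
        rw [← pow_add]
        exact pow_le_pow_right₀ hφ1 hrA2
      have hpowB : φ ^ rB * φ ≤ φ ^ rX := by
        have := pow_le_pow_right₀ hφ1 hrB1
        rwa [pow_succ] at this
      have hcube : φ ^ 3 = φ ^ 2 + φ := by linear_combination φ * hφsq
      have hsum : φ ^ rA + φ ^ rB ≤ φ ^ rX := by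
        have h1 : φ ^ rA * φ ^ 3 ≤ φ ^ rX * φ := by
          calc φ ^ rA * φ ^ 3 = (φ ^ rA * φ ^ 2) * φ := by ring
          _ ≤ φ ^ rX * φ := mul_le_mul_of_nonneg_right hpowA hφ0.le
        have h2 : φ ^ rB * φ ^ 3 ≤ φ ^ rX * φ ^ 2 := by
          calc φ ^ rB * φ ^ 3 = (φ ^ rB * φ) * φ ^ 2 := by ring
          _ ≤ φ ^ rX * φ ^ 2 := mul_le_mul_of_nonneg_right hpowB (by positivity)
        have h3 : (φ ^ rA + φ ^ rB) * φ ^ 3 ≤ φ ^ rX * φ ^ 3 := by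
          calc (φ ^ rA + φ ^ rB) * φ ^ 3 = φ ^ rA * φ ^ 3 + φ ^ rB * φ ^ 3 := by ring
          _ ≤ φ ^ rX * φ + φ ^ rX * φ ^ 2 := add_le_add h1 h2
          _ = φ ^ rX * φ ^ 3 := by rw [hcube]; ring
        exact le_of_mul_le_mul_right h3 (pow_pos hφ0 3)
      have : (eps (M ↾ X₀) : ℝ) < (eps (M ↾ X₀) : ℝ) := by
        calc (eps (M ↾ X₀) : ℝ) ≤ (eps (M ↾ A) : ℝ) + (eps (M ↾ B) : ℝ) := by
              exact_mod_cast hcnt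
        _ < g X₀ * φ ^ rA + g X₀ * φ ^ rB := add_lt_add_of_lt_of_le e1 e2
        _ = g X₀ * (φ ^ rA + φ ^ rB) := by ring
        _ ≤ g X₀ * φ ^ rX := mul_le_mul_of_nonneg_left hsum hg0.le
        _ = (eps (M ↾ X₀) : ℝ) := e3.symm
      exact lt_irrefl _ this
    · have h := (hgE ▸ hX₀max M.E Subset.rfl : (eps M : ℝ) / φ ^ rank M ≤ g X₀)
      rw [hg] at h
      rw [div_le_div_iff₀ (pow_pos hφ0 _) (pow_pos hφ0 _)] at h
      have hrw : φ ^ ((rank (M ↾ X₀) : ℝ) - (rank M : ℝ))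
          = φ ^ rank (M ↾ X₀) / φ ^ rank M := by
        rw [Real.rpow_sub hφ0, Real.rpow_natCast, Real.rpow_natCast]
      rw [hrw, div_mul_eq_mul_div, div_le_iff₀ (pow_pos hφ0 _), mul_comm]
      linarith [h]

end GrowthRate
end

section
/- If M is a weakly round matroid and e ∈ E(M), then M/e (the contraction of e) is weakly round. -/
open Matroid Set

namespace GrowthRate

variable {α : Type*}

section Aux

variable {M : Matroid α} {e : α} {I J X : Set α}

lemma aux_contract_ground (M : Matroid α) (e : α) : (contract M {e}).E = M.E \ {e} := rfl

lemma aux_le_eRk (hI : M.Indep I) (hIX : I ⊆ X) : I.encard ≤ eRk M X :=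
  le_iSup₂_of_le I ⟨hI, hIX⟩ le_rfl

lemma aux_eRk_le {c : ℕ∞} (h : ∀ I, M.Indep I → I ⊆ X → I.encard ≤ c) : eRk M X ≤ c :=
  iSup₂_le fun I hI => h I hI.1 hI.2

lemma aux_eRk_add_le {c d : ℕ∞} (h : ∀ I, M.Indep I → I ⊆ X → I.encard + c ≤ d) :
    eRk M X + c ≤ d := by
  have hne : ({I : Set α | M.Indep I ∧ I ⊆ X}).Nonempty := ⟨∅, M.empty_indep, empty_subset X⟩
  rw [eRk, ENat.biSup_add hne]
  exact iSup₂_le fun I hI => h I hI.1 hI.2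

lemma aux_delete_indep {J : Set α} : (delete M✶ {e}).Indep J ↔ M✶.Indep J ∧ J ⊆ M.E \ {e} :=
  Iff.rfl

/-- every `M✶`-base contains every loop's... : if `{e}` is dependent in `M`,
then every base of `M✶` contains `e`. -/
lemma aux_mem_dual_base (he : e ∈ M.E) (hl : ¬ M.Indep {e}) {B : Set α}
    (hB : M✶.IsBase B) : e ∈ B := by
  by_contra hem
  exact hl (hB.compl_isBase_of_dual.indep.subset (singleton_subset_iff.2 ⟨he, hem⟩))

/-- Characterisation of independence in the contraction, when `e` is a nonloop. -/
lemma aux_contract_indep_nonloop (he : e ∈ M.E) (hl : M.Indep {e}) :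
    (contract M {e}).Indep I ↔ I ⊆ M.E \ {e} ∧ M.Indep (insert e I) := by
  have hdd : M✶✶ = M := dual_dual M
  have hE' : (delete M✶ {e}).E = M.E \ {e} := rfl
  rw [contract, dual_indep_iff_exists', hE']
  constructor
  · rintro ⟨hIE, B, hB, hdj⟩
    refine ⟨hIE, ?_⟩
    rw [isBase_iff_maximal_indep] at hB
    obtain ⟨⟨hBi, hBE⟩, hBmax⟩ := hB
    obtain ⟨B', hB', hBB'⟩ := hBi.exists_isBase_superset
    have hB'sub : B' ⊆ insert e B := by
      intro x hx
      by_cases hxe : x = e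
      · exact hxe ▸ mem_insert _ _
      · exact mem_insert_of_mem _ <| hBmax (y := B' ∩ (M.E \ {e}))
          ⟨hB'.indep.subset inter_subset_left, inter_subset_right⟩
          (subset_inter hBB' hBE) ⟨hx, hB'.subset_ground hx, hxe⟩
    by_cases heB' : e ∈ B'
    · -- `B' = insert e B`; exchange with a base avoiding `e` contradicts maximality of `B`.
      exfalso
      have hed : M✶✶.Indep {e} := hdd.symm ▸ hl
      obtain ⟨-, B₀, hB₀, hdj₀⟩ := (dual_indep_iff_exists' (M := M✶)).1 hed
      have heB : e ∉ B := fun h => (hBE h).2 rfl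
      obtain ⟨f, hf, hBf⟩ := hB'.exchange hB₀ ⟨heB', fun h => hdj₀.ne_of_mem rfl h rfl⟩
      have hBf' : M✶.IsBase (insert f (B' \ {e})) := hBf
      have hfB : f ∉ B := fun h => hf.2 (hBB' h)
      have hfE' : insert f (B' \ {e}) ⊆ M.E \ {e} := by
        refine insert_subset ⟨hB₀.subset_ground hf.1, fun h => hdj₀.ne_of_mem rfl hf.1 h.symm⟩ ?_
        intro x hx
        exact ⟨hB'.subset_ground hx.1, hx.2⟩
      have hBsub : B ⊆ insert f (B' \ {e}) :=
        subset_insert_iff_of_notMem hfB |>.2 (subset_diff_singleton hBB' heB)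
      have := hBmax ⟨hBf'.indep, hfE'⟩ hBsub (mem_insert _ _)
      exact hfB this
    · -- `B' = B` is a base of `M✶`; then `insert e I ⊆ M.E \ B'` is independent.
      have hBeq : B = B' := hBB'.antisymm fun x hx => by
        rcases hB'sub hx with h | h
        · exact absurd (h ▸ hx) heB'
        · exact h
      refine (hB'.compl_isBase_of_dual.indep).subset ?_
      refine insert_subset ⟨he, heB'⟩ fun x hx => ⟨(hIE hx).1, fun hxB => ?_⟩
      exact hdj.ne_of_mem hx (hBeq ▸ hxB) rfl
  · rintro ⟨hIE, hind⟩
    obtain ⟨B', hB', hsub⟩ := hind.exists_isBase_superset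
    refine ⟨hIE, M.E \ B', ?_, ?_⟩
    · rw [isBase_iff_maximal_indep]
      refine ⟨aux_delete_indep.2 ⟨hB'.compl_isBase_dual.indep, ?_⟩, fun J hJ hBJ => ?_⟩
      · exact fun x hx => ⟨hx.1, fun h => hx.2 (hsub (h ▸ mem_insert _ _))⟩
      · exact (hB'.compl_isBase_dual.eq_of_subset_indep (aux_delete_indep.1 hJ).1
          hBJ).symm.subset
    · exact disjoint_left.2 fun x hx hxc => hxc.2 (hsub (mem_insert_of_mem _ hx))

/-- Characterisation of independence in the contraction, when `e` is a loop. -/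
lemma aux_contract_indep_loop (he : e ∈ M.E) (hl : ¬ M.Indep {e}) :
    (contract M {e}).Indep I ↔ M.Indep I := by
  have hE' : (delete M✶ {e}).E = M.E \ {e} := rfl
  rw [contract, dual_indep_iff_exists', hE']
  constructor
  · rintro ⟨hIE, B, hB, hdj⟩
    rw [isBase_iff_maximal_indep] at hB
    obtain ⟨⟨hBi, hBE⟩, hBmax⟩ := hB
    obtain ⟨B', hB', hBB'⟩ := hBi.exists_isBase_superset
    have heB' : e ∈ B' := aux_mem_dual_base he hl hB'
    refine (hB'.compl_isBase_of_dual.indep).subset fun x hx => ⟨(hIE hx).1, fun hxB => ?_⟩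
    rcases eq_or_ne x e with rfl | hxe
    · exact (hIE hx).2 rfl
    · have : x ∈ B' ∩ (M.E \ {e}) := ⟨hxB, (hIE hx).1, hxe⟩
      have hxB2 : x ∈ B := hBmax ⟨hB'.indep.subset inter_subset_left, inter_subset_right⟩
        (subset_inter hBB' hBE) this
      exact hdj.ne_of_mem hx hxB2 rfl
  · intro hind
    have heI : e ∉ I := fun h => hl (hind.subset (singleton_subset_iff.2 h))
    obtain ⟨B', hB', hsub⟩ := hind.exists_isBase_superset
    have hB'd : M✶.IsBase (M.E \ B') := hB'.compl_isBase_dual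
    have heB : e ∈ M.E \ B' := aux_mem_dual_base he hl hB'd
    refine ⟨fun x hx => ⟨hind.subset_ground hx, fun h => heI (h ▸ hx)⟩,
      (M.E \ B') \ {e}, ?_, ?_⟩
    · rw [isBase_iff_maximal_indep]
      refine ⟨⟨hB'd.indep.subset diff_subset, fun x hx => ⟨hx.1.1, hx.2⟩⟩, fun J hJ hBJ => ?_⟩
      -- maximality: `insert e J` is independent in `M✶` since every `M✶`-base contains `e`.
      obtain ⟨B₀, hB₀, hJB₀⟩ := hJ.1.exists_isBase_superset
      have heB₀ : e ∈ B₀ := aux_mem_dual_base he hl hB₀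
      have hins : M✶.Indep (insert e J) := hB₀.indep.subset (insert_subset heB₀ hJB₀)
      have hsup : M.E \ B' ⊆ insert e J := by
        intro x hx
        rcases eq_or_ne x e with rfl | hxe
        · exact mem_insert _ _
        · exact mem_insert_of_mem _ (hBJ ⟨hx, hxe⟩)
      have heq := hB'd.eq_of_subset_indep hins hsup
      intro x hx
      refine ⟨by rw [heq]; exact mem_insert_of_mem _ hx, ((aux_delete_indep.1 hJ).2 hx).2⟩
    · exact disjoint_left.2 fun x hx hxc => hxc.1.2 (hsub hx)

/-- `M.Indep (insert e I)` combined with `e ∈ I`-removal notions: in the nonloop case,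
the rank of `insert e X` in `M` is at most the rank of `X` in the contraction plus one. -/
lemma aux_eRk_insert_le_nonloop (he : e ∈ M.E) (hl : M.Indep {e}) (X : Set α) :
    eRk M (insert e X) ≤ eRk (contract M {e}) X + 1 := by
  refine aux_eRk_le fun J hJ hJX => ?_
  by_cases heJ : e ∈ J
  · have hJe : (contract M {e}).Indep (J \ {e}) := by
      rw [aux_contract_indep_nonloop he hl]
      refine ⟨fun x hx => ⟨hJ.subset_ground hx.1, hx.2⟩, ?_⟩
      rwa [insert_diff_singleton, insert_eq_of_mem heJ]
    have hJXe : J \ {e} ⊆ X := fun x hx => by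
      rcases hJX hx.1 with h | h
      · exact absurd h hx.2
      · exact h
    calc J.encard = (J \ {e}).encard + 1 := (encard_diff_singleton_add_one heJ).symm
      _ ≤ eRk (contract M {e}) X + 1 := add_le_add_left (aux_le_eRk hJe hJXe) 1
  · have hJX' : J ⊆ X := fun x hx => by
      rcases hJX hx with h | h
      · exact absurd h (fun h' => heJ (h' ▸ hx))
      · exact h
    by_cases hins : M.Indep (insert e J)
    · have : (contract M {e}).Indep J := by
        rw [aux_contract_indep_nonloop he hl]
        exact ⟨fun x hx => ⟨hJ.subset_ground hx, fun h => heJ (h ▸ hx)⟩, hins⟩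
      exact le_trans (aux_le_eRk this hJX') le_self_add
    · -- replace `J` by an equicardinal basis `J'` of `insert e J` containing `e`.
      have hJE : insert e J ⊆ M.E := insert_subset he hJ.subset_ground
      obtain ⟨J', hJ', heJ'⟩ := hl.subset_isBasis_of_subset
        (singleton_subset_iff.2 (mem_insert e J)) hJE
      have hJb : M.IsBasis J (insert e J) := by
        rw [isBasis_iff]
        refine ⟨hJ, subset_insert _ _, fun K hK hJK hKs => ?_⟩
        by_contra hne
        obtain ⟨x, hxK, hxJ⟩ := exists_of_ssubset (hJK.ssubset_of_ne hne)
        have hxe : x = e := by rcases hKs hxK with h | h; exact h; exact absurd h hxJ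
        exact hins (hK.subset (insert_subset (hxe ▸ hxK) hJK))
      have hcard : J.encard = J'.encard := hJb.encard_eq_encard hJ'
      have heJ'' : e ∈ J' := heJ' rfl
      have hJ'i : (contract M {e}).Indep (J' \ {e}) := by
        rw [aux_contract_indep_nonloop he hl]
        refine ⟨fun x hx => ⟨hJ'.indep.subset_ground hx.1, hx.2⟩, ?_⟩
        rw [insert_diff_singleton, insert_eq_of_mem heJ'']
        exact hJ'.indep
      have hJ'X : J' \ {e} ⊆ X := fun x hx => by
        rcases hJ'.subset hx.1 with h | h
        · exact absurd h hx.2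
        · exact hJX' h
      calc J.encard = (J' \ {e}).encard + 1 := by
            rw [hcard, encard_diff_singleton_add_one heJ'']
        _ ≤ eRk (contract M {e}) X + 1 := add_le_add_left (aux_le_eRk hJ'i hJ'X) 1

lemma aux_eRank_nonloop (he : e ∈ M.E) (hl : M.Indep {e}) :
    eRank (contract M {e}) + 1 ≤ eRank M := by
  rw [eRank]
  refine aux_eRk_add_le fun I hI hIE => ?_
  rw [aux_contract_indep_nonloop he hl] at hI
  have heI : e ∉ I := fun h => (hI.1 h).2 rfl
  rw [← encard_insert_of_notMem heI]
  exact aux_le_eRk hI.2 (insert_subset he (hI.1.trans diff_subset))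

lemma aux_eRk_insert_le_loop (he : e ∈ M.E) (hl : ¬ M.Indep {e}) (X : Set α) :
    eRk M (insert e X) ≤ eRk (contract M {e}) X := by
  refine aux_eRk_le fun J hJ hJX => ?_
  have heJ : e ∉ J := fun h => hl (hJ.subset (singleton_subset_iff.2 h))
  have hJX' : J ⊆ X := fun x hx => by
    rcases hJX hx with h | h
    · exact absurd h (fun h' => heJ (h' ▸ hx))
    · exact h
  exact aux_le_eRk ((aux_contract_indep_loop he hl).2 hJ) hJX'

lemma aux_eRank_loop (he : e ∈ M.E) (hl : ¬ M.Indep {e}) :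
    eRank (contract M {e}) ≤ eRank M := by
  refine aux_eRk_le fun I hI hIE => ?_
  rw [aux_contract_indep_loop he hl] at hI
  exact aux_le_eRk hI hI.subset_ground

end Aux

/-- Contracting an element of a weakly round matroid yields a weakly round matroid. -/
theorem statement_3 {α : Type*} (M : Matroid α) (hM : WeaklyRound M) (e : α)
    (he : e ∈ M.E) : WeaklyRound (contract M {e}) := by
  rintro ⟨A, B, hUn, hA, hB⟩
  rw [aux_contract_ground] at hUn
  have hUn' : insert e A ∪ insert e B = M.E := by
    rw [insert_union, union_insert, insert_idem, hUn, insert_diff_singleton,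
      insert_eq_of_mem he]
  apply hM
  by_cases hl : M.Indep {e}
  · refine ⟨insert e A, insert e B, hUn', ?_, ?_⟩
    · calc eRk M (insert e A) + 2 ≤ (eRk (contract M {e}) A + 1) + 2 :=
            add_le_add_left (aux_eRk_insert_le_nonloop he hl A) 2
        _ = (eRk (contract M {e}) A + 2) + 1 := by ring
        _ ≤ eRank (contract M {e}) + 1 := add_le_add_left hA 1
        _ ≤ eRank M := aux_eRank_nonloop he hl
    · calc eRk M (insert e B) + 1 ≤ (eRk (contract M {e}) B + 1) + 1 :=
            add_le_add_left (aux_eRk_insert_le_nonloop he hl B) 1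
        _ = (eRk (contract M {e}) B + 1) + 1 := rfl
        _ ≤ eRank (contract M {e}) + 1 := add_le_add_left hB 1
        _ ≤ eRank M := aux_eRank_nonloop he hl
  · refine ⟨insert e A, insert e B, hUn', ?_, ?_⟩
    · calc eRk M (insert e A) + 2 ≤ eRk (contract M {e}) A + 2 :=
            add_le_add_left (aux_eRk_insert_le_loop he hl A) 2
        _ ≤ eRank (contract M {e}) := hA
        _ ≤ eRank M := aux_eRank_loop he hl
    · calc eRk M (insert e B) + 1 ≤ eRk (contract M {e}) B + 1 :=
            add_le_add_left (aux_eRk_insert_le_loop he hl B) 1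
        _ ≤ eRank (contract M {e}) := hB
        _ ≤ eRank M := aux_eRank_loop he hl

end GrowthRate
end

section
/- Let q be a prime power and M a matroid of rank at least 3 with an element e such that M \ e ≅ PG(r(M)-1, q). If the unique minimal flat F of M \ e spanning e has rank at least 2, then M/e has a U_{2,q²+1}-minor; if F has rank at least 3, then M/e has a U_{2,q²+q+1}-minor. -/
open Matroid Set

namespace GrowthRate

variable {α : Type*}

lemma delete_def (M : Matroid α) (D : Set α) : delete M D = M ↾ (M.E \ D) := rfl

lemma contract_eq (M : Matroid α) (C : Set α) : contract M C = (M✶ ↾ (M.E \ C))✶ := by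
  rw [contract, delete_def, dual_ground]

@[simp] lemma contract_ground (M : Matroid α) (C : Set α) : (contract M C).E = M.E \ C := by
  rw [contract_eq, dual_ground, restrict_ground_eq]

lemma contract_dual (M : Matroid α) (C : Set α) : (contract M C)✶ = M✶ ↾ (M.E \ C) := by
  rw [contract_eq, dual_dual]

lemma contract_contract (M : Matroid α) (C₁ C₂ : Set α) :
    contract (contract M C₁) C₂ = contract M (C₁ ∪ C₂) := by
  rw [contract_eq (contract M C₁), contract_dual, contract_ground,
    restrict_restrict_eq _ diff_subset, diff_diff, contract_eq]

lemma flat_closure_s9 (M : Matroid α) (X : Set α) : M.IsFlat (M.closure X) := by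
  rw [closure_def]
  haveI : Nonempty ↑{F | M.IsFlat F ∧ X ∩ M.E ⊆ F} := ⟨⟨M.E, M.ground_isFlat, inter_subset_right⟩⟩
  rw [sInter_eq_iInter]
  exact IsFlat.iInter fun F => F.2.1

lemma contract_indep_iff (M : Matroid α) {C I : Set α} (hC : M.Indep C) (hIE : I ⊆ M.E \ C) :
    (contract M C).Indep I ↔ M.Indep (I ∪ C) := by
  have hCE : C ⊆ M.E := hC.subset_ground
  rw [contract_eq, dual_indep_iff_exists', restrict_ground_eq]
  constructor
  · rintro ⟨hIR, B', hB', hdisj⟩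
    rw [isBase_restrict_iff', isBasis'_iff_isBasis (show M.E \ C ⊆ M✶.E from diff_subset)] at hB'
    have hB'E : B' ⊆ M.E := hB'.indep.subset_ground
    have hKs : M.Spanning (M.E \ B') := by
      rw [← coindep_iff_compl_spanning]; exact hB'.indep
    have hCK : C ⊆ M.E \ B' := fun x hx => ⟨hCE hx, fun hxB => (hB'.subset hxB).2 hx⟩
    have hIK : I ⊆ M.E \ B' := fun x hx => ⟨(hIE hx).1, fun hxB => hdisj.ne_of_mem hx hxB rfl⟩
    have hmin : ∀ x ∈ M.E \ B', x ∉ C → ¬ M.Spanning ((M.E \ B') \ {x}) := by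
      intro x hx hxC hsp
      have hxB : x ∈ (M.E \ C) \ B' := ⟨⟨hx.1, hxC⟩, hx.2⟩
      have hdep := hB'.insert_dep hxB
      have : M✶.Indep (insert x B') := by
        rw [coindep_def.symm, coindep_iff_compl_spanning]
        convert hsp using 1
        rw [← union_singleton, ← diff_diff]
      exact hdep.not_indep this
    obtain ⟨A, hA, hCA⟩ := hC.subset_isBasis_of_subset (subset_union_right (s := I))
      (union_subset (hIE.trans diff_subset) hCE)
    obtain ⟨B, hB, hAB⟩ := hA.indep.subset_isBasis_of_subset
      (hA.subset.trans (union_subset hIK hCK)) diff_subset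
    have hBbase : M.IsBase B := by
      rw [isBase_iff_indep_closure_eq]
      exact ⟨hB.indep, by rw [hB.closure_eq_closure, hKs.closure_eq]⟩
    have hIB : I ⊆ B := by
      intro x hx
      by_contra hxB
      refine hmin x (hIK hx) ((hIE hx).2) ?_
      exact hBbase.spanning.superset (subset_diff_singleton hB.subset hxB)
        (diff_subset.trans diff_subset)
    have hIA : I ⊆ A := by
      have h1 : M.Indep (A ∪ I) := hBbase.indep.subset (union_subset hAB hIB)
      have := hA.eq_of_subset_indep h1 subset_union_left
        (union_subset hA.subset subset_union_left)
      rw [this]; exact subset_union_right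
    have : A = I ∪ C := hA.subset.antisymm (union_subset hIA hCA)
    exact this ▸ hA.indep
  · intro h
    obtain ⟨B, hB, hICB⟩ := h.exists_isBase_superset
    have hCB : C ⊆ B := subset_union_right.trans hICB
    refine ⟨hIE, M.E \ B, ?_, ?_⟩
    · rw [isBase_restrict_iff', isBasis'_iff_isBasis (show M.E \ C ⊆ M✶.E from diff_subset)]
      have hBd : M✶.IsBase (M.E \ B) := hB.compl_isBase_dual
      rw [isBasis_iff (show M.E \ C ⊆ M✶.E from diff_subset)]
      exact ⟨hBd.indep, diff_subset_diff_right hCB,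
        fun J hJ hBJ hJC => (hBd.eq_of_subset_indep hJ hBJ)⟩
    · exact (subset_diff.mp
        (diff_subset_diff_right (subset_union_left.trans hICB) :
          M.E \ B ⊆ M.E \ I)).2.symm


lemma core (M : Matroid α) (e : α) (X' T : Set α) (m : ℕ)
    (hTE : T ⊆ M.E \ insert e X') (hT : T.encard = m) (hm : 2 ≤ m)
    (W1 : ∀ t ∈ T, M.Indep (insert e (X' ∪ {t})))
    (W2 : ∀ t ∈ T, ∀ s ∈ T, t ≠ s → M.Indep (insert e (X' ∪ {t, s})))
    (W4 : ∀ x ∈ T, ∀ y ∈ T, ∀ z ∈ T, x ≠ y → x ≠ z → y ≠ z →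
      ¬ M.Indep (insert e (X' ∪ {x, y, z}))) :
    HasUnifLineMinor (contract M {e}) m := by
  classical
  set C := insert e X' with hCdef
  -- two distinct elements of T
  have hm2 : (2 : ℕ∞) ≤ T.encard := by
    rw [hT]; exact_mod_cast Nat.cast_le.mpr hm
  obtain ⟨t₀, ht₀T, t₁, ht₁T, ht01⟩ : ∃ a ∈ T, ∃ b ∈ T, a ≠ b := by
    obtain ⟨P, hPT, hP2⟩ := Set.exists_subset_encard_eq hm2
    obtain ⟨a, b, hab, rfl⟩ := Set.encard_eq_two.mp hP2
    exact ⟨a, hPT (by simp), b, hPT (by simp), hab⟩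
  have hC: M.Indep C := (W1 t₀ ht₀T).subset (by
    rw [hCdef]; exact insert_subset_insert subset_union_left)
  set D : Set α := (M.E \ C) \ T with hDdef
  set N : Matroid α := delete (contract M C) D with hNdef
  have hNeq : N = (contract M C) ↾ T := by
    rw [hNdef, delete_def, contract_ground, hDdef, diff_diff_cancel_left hTE]
  have hNE : N.E = T := by rw [hNeq, restrict_ground_eq]
  -- independence characterization
  have hNI : ∀ I : Set α, N.Indep I ↔ (M.Indep (I ∪ C) ∧ I ⊆ T) := by
    intro I
    rw [hNeq, restrict_indep_iff]
    constructor
    · rintro ⟨hi, hsub⟩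
      exact ⟨(contract_indep_iff M hC (hsub.trans hTE)).mp hi, hsub⟩
    · rintro ⟨hi, hsub⟩
      exact ⟨(contract_indep_iff M hC (hsub.trans hTE)).mpr hi, hsub⟩
  have hset1 : ∀ t : α, {t} ∪ C = insert e (X' ∪ {t}) := by
    intro t; ext x; simp [hCdef]; try tauto
  have hset2 : ∀ t s : α, {t, s} ∪ C = insert e (X' ∪ {t, s}) := by
    intro t s; ext x; simp [hCdef]; try tauto
  have hset3 : ∀ x y z : α, {x, y, z} ∪ C = insert e (X' ∪ {x, y, z}) := by
    intro x y z; ext w; simp [hCdef]; try tauto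
  refine ⟨N, ⟨X', D, ?_⟩, ?_, ?_, ?_⟩
  · rw [hNdef, contract_contract, singleton_union]
  · -- eRank N = 2
    have hub : ∀ I : Set α, N.Indep I → I.encard ≤ 2 := by
      intro I hI
      by_contra hgt
      rw [not_le] at hgt
      have h3 : (3 : ℕ∞) ≤ I.encard := by
        exact Order.add_one_le_of_lt hgt
      obtain ⟨P, hPI, hP3⟩ := Set.exists_subset_encard_eq h3
      obtain ⟨x, y, z, hxy, hxz, hyz, rfl⟩ := Set.encard_eq_three.mp hP3
      have hIT : I ⊆ T := ((hNI I).mp hI).2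
      have := (hNI {x, y, z}).mp (hI.subset hPI)
      rw [hset3] at this
      exact W4 x (hIT (hPI (by simp))) y (hIT (hPI (by simp))) z (hIT (hPI (by simp)))
        hxy hxz hyz this.1
    have hpair : N.Indep {t₀, t₁} := by
      rw [hNI, hset2]
      exact ⟨W2 t₀ ht₀T t₁ ht₁T ht01, insert_subset ht₀T (by simpa using ht₁T)⟩
    rw [eRank, eRk]
    apply le_antisymm
    · exact iSup₂_le fun I hI => hub I hI.1
    · have h2 : ({t₀, t₁} : Set α).encard = 2 := Set.encard_pair ht01
      calc (2 : ℕ∞) = ({t₀, t₁} : Set α).encard := h2.symm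
        _ ≤ _ := le_iSup₂ (f := fun (I : Set α) (_ : I ∈ {I : Set α | N.Indep I ∧ I ⊆ N.E}) =>
            I.encard) ({t₀, t₁}) ⟨hpair, by rw [hNE]; exact insert_subset ht₀T (by simpa using ht₁T)⟩
  · -- Simple
    intro x hx y hy
    rw [hNE] at hx hy
    constructor
    · rw [hNI, hset1]
      exact ⟨W1 x hx, by simpa using hx⟩
    · intro hxy
      rw [hNI, hset2]
      exact ⟨W2 x hx y hy hxy, insert_subset hx (by simpa using hy)⟩
  · rw [hNE, hT]

section Rep
variable {F : Type} [Field F] [Fintype F] {n : ℕ}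

open Submodule

lemma indep_iff_li (P : Matroid α) (f : α → Fin n → F)
    (hf1 : ∀ I ⊆ P.E, (P.Indep I ↔ LinearIndependent F (fun x : I => f x)))
    (hinj : Set.InjOn f P.E) {S : Set α} (hS : S ⊆ P.E) :
    P.Indep S ↔ LinearIndependent F ((↑) : (f '' S) → (Fin n → F)) := by
  rw [hf1 S hS]; exact linearIndepOn_iff_image (hinj.mono hS)

lemma mem_closure_imp_span (P : Matroid α) (f : α → Fin n → F)
    (hf1 : ∀ I ⊆ P.E, (P.Indep I ↔ LinearIndependent F (fun x : I => f x)))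
    (hinj : Set.InjOn f P.E) {S : Set α} (hS : S ⊆ P.E) {x : α} (hx : x ∈ P.closure S) :
    f x ∈ span F (f '' S) := by
  obtain ⟨I, hI⟩ := P.exists_isBasis S hS
  have hIE : I ⊆ P.E := hI.indep.subset_ground
  have hxc : x ∈ P.closure I := by rwa [hI.closure_eq_closure]
  by_cases hxI : x ∈ I
  · exact subset_span (mem_image_of_mem f (hI.subset hxI))
  by_cases hmem : f x ∈ span F (f '' I)
  · exact span_mono (image_mono hI.subset) hmem
  exfalso
  have hxE : x ∈ P.E := mem_ground_of_mem_closure hxc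
  have hIli : LinearIndependent F ((↑) : (f '' I) → (Fin n → F)) :=
    (indep_iff_li P f hf1 hinj hIE).mp hI.indep
  have hfxI : f x ∉ f '' I := by
    rintro ⟨y, hyI, hyx⟩
    exact hxI (hinj (hIE hyI) hxE hyx ▸ hyI)
  have hins : P.Indep (insert x I) := by
    rw [indep_iff_li P f hf1 hinj (insert_subset hxE hIE), image_insert_eq]
    exact (linearIndepOn_id_insert hfxI).mpr ⟨hIli, hmem⟩
  exact ((hI.indep.notMem_closure_iff_of_notMem hxI hxE).mpr hins) hxc

lemma span_mem_imp_closure (P : Matroid α) (f : α → Fin n → F)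
    (hf1 : ∀ I ⊆ P.E, (P.Indep I ↔ LinearIndependent F (fun x : I => f x)))
    (hinj : Set.InjOn f P.E) {S : Set α} (hS : S ⊆ P.E) {x : α} (hxE : x ∈ P.E)
    (hx : f x ∈ span F (f '' S)) : x ∈ P.closure S := by
  obtain ⟨I, hI⟩ := P.exists_isBasis S hS
  have hIE : I ⊆ P.E := hI.indep.subset_ground
  have hspan : span F (f '' S) = span F (f '' I) := by
    refine le_antisymm (span_le.mpr ?_) (span_mono (image_mono hI.subset))
    rintro v ⟨s, hsS, rfl⟩
    exact mem_closure_imp_span P f hf1 hinj hIE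
      (by rw [hI.closure_eq_closure]; exact P.subset_closure S hS hsS)
  rw [hspan] at hx
  by_contra hxc
  rw [← hI.closure_eq_closure] at hxc
  have hxI : x ∉ I := fun h => hxc (P.subset_closure I hIE h)
  have hins : P.Indep (insert x I) :=
    (hI.indep.notMem_closure_iff_of_notMem hxI hxE).mp hxc
  have hli : LinearIndependent F ((↑) : (f '' (insert x I)) → (Fin n → F)) :=
    (indep_iff_li P f hf1 hinj (insert_subset hxE hIE)).mp hins
  rw [image_insert_eq] at hli
  have hfxI : f x ∉ f '' I := by
    rintro ⟨y, hyI, hyx⟩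
    exact hxI (hinj (hIE hyI) hxE hyx ▸ hyI)
  exact ((linearIndepOn_id_insert hfxI).mp hli).2 hx

end Rep

section Main
variable {F : Type} [Field F] [Fintype F] {n : ℕ}
open Submodule

set_option linter.unusedSectionVars false

lemma delete_ground (M : Matroid α) (D : Set α) : (delete M D).E = M.E \ D := rfl

lemma Pclosure_subset (M : Matroid α) (e : α) {S : Set α} (hS : S ⊆ M.E \ {e}) :
    (delete M {e}).closure S ⊆ M.closure S := by
  set P := delete M {e} with hP
  have hSP : S ⊆ P.E := hS
  intro x hx
  obtain ⟨I, hI⟩ := P.exists_isBasis S hSP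
  have hIE : I ⊆ P.E := hI.indep.subset_ground
  have hxP : x ∈ P.E := mem_ground_of_mem_closure hx
  have hxc : x ∈ P.closure I := by rwa [hI.closure_eq_closure]
  have hIM : M.Indep I := by
    have := hI.indep
    rw [hP, delete_def, restrict_indep_iff] at this
    exact this.1
  by_cases hxI : x ∈ I
  · exact M.closure_subset_closure hI.subset (M.subset_closure I hIM.subset_ground hxI)
  by_cases hxM : x ∈ M.closure I
  · exact M.closure_subset_closure hI.subset hxM
  exfalso
  have hMi : M.Indep (insert x I) := by
    rw [hIM.insert_indep_iff_of_notMem hxI]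
    exact ⟨(show x ∈ M.E \ {e} from hxP).1, hxM⟩
  have hPi : P.Indep (insert x I) := by
    rw [hP, delete_def, restrict_indep_iff]
    exact ⟨hMi, insert_subset hxP hIE⟩
  exact ((hI.indep.notMem_closure_iff_of_notMem hxI hxP).mpr hPi) hxc

lemma e_closure_iff (M : Matroid α) (e : α) (f : α → Fin n → F) (Fl : Set α)
    (he : e ∈ M.E)
    (hf1 : ∀ I ⊆ (delete M {e}).E, ((delete M {e}).Indep I ↔
      LinearIndependent F (fun x : I => f x)))
    (hinj : Set.InjOn f (delete M {e}).E)
    (hFl : Fl ⊆ (delete M {e}).E)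
    (hsp : e ∈ M.closure Fl)
    (hmin : ∀ F' : Set α, (delete M {e}).IsFlat F' → e ∈ M.closure F' → Fl ⊆ F')
    {S : Set α} (hS : S ⊆ M.E \ {e}) :
    e ∈ M.closure S ↔ span F (f '' Fl) ≤ span F (f '' S) := by
  set P := delete M {e} with hP
  have hSP : S ⊆ P.E := hS
  constructor
  · intro hecl
    have hFlsub : Fl ⊆ P.closure S := by
      refine hmin (P.closure S) (flat_closure_s9 P S) ?_
      exact M.closure_subset_closure (P.subset_closure S hSP) hecl
    refine span_le.mpr ?_
    rintro v ⟨x, hxFl, rfl⟩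
    exact mem_closure_imp_span P f hf1 hinj hSP (hFlsub hxFl)
  · intro hle
    have hFlsub : Fl ⊆ P.closure S := by
      intro x hxFl
      exact span_mem_imp_closure P f hf1 hinj hSP (hFl hxFl)
        (hle (subset_span (mem_image_of_mem f hxFl)))
    have h1 : Fl ⊆ M.closure S := hFlsub.trans (Pclosure_subset M e hS)
    exact M.closure_subset_closure_of_subset_closure h1 hsp

lemma insert_e_indep_iff (M : Matroid α) (e : α) (f : α → Fin n → F) (Fl : Set α)
    (he : e ∈ M.E)
    (hf1 : ∀ I ⊆ (delete M {e}).E, ((delete M {e}).Indep I ↔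
      LinearIndependent F (fun x : I => f x)))
    (hinj : Set.InjOn f (delete M {e}).E)
    (hFl : Fl ⊆ (delete M {e}).E)
    (hsp : e ∈ M.closure Fl)
    (hmin : ∀ F' : Set α, (delete M {e}).IsFlat F' → e ∈ M.closure F' → Fl ⊆ F')
    {S : Set α} (hS : S ⊆ M.E \ {e}) :
    M.Indep (insert e S) ↔
      (LinearIndependent F ((↑) : (f '' S) → (Fin n → F)) ∧
        ¬ (span F (f '' Fl) ≤ span F (f '' S))) := by
  have heS : e ∉ S := fun h => (hS h).2 rfl
  rw [insert_indep_iff]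
  have h1 : M.Indep S ↔ LinearIndependent F ((↑) : (f '' S) → (Fin n → F)) := by
    rw [show M.Indep S ↔ (delete M {e}).Indep S by
      rw [delete_def, restrict_indep_iff]; exact ⟨fun h => ⟨h, hS⟩, fun h => h.1⟩]
    exact indep_iff_li _ f hf1 hinj hS
  rw [h1]
  constructor
  · rintro ⟨hli, himp⟩
    exact ⟨hli, fun hc => (himp heS).2
      ((e_closure_iff M e f Fl he hf1 hinj hFl hsp hmin hS).mpr hc)⟩
  · rintro ⟨hli, hns⟩
    exact ⟨hli, fun _ => ⟨he, fun hc =>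
      hns ((e_closure_iff M e f Fl he hf1 hinj hFl hsp hmin hS).mp hc)⟩⟩

end Main

section LA
variable {F : Type} [Field F] {V : Type*} [AddCommGroup V] [Module F V]
open Submodule

lemma disjoint_span_of_li_union {A B : Set V}
    (h : LinearIndependent F ((↑) : ↥(A ∪ B) → V)) (hAB : Disjoint A B) :
    Disjoint (span F A) (span F B) := by
  have himg1 : (fun x : ↥(A ∪ B) => (x : V)) '' {x : ↥(A ∪ B) | (x : V) ∈ A} = A := by
    ext v; constructor
    · rintro ⟨x, hx, rfl⟩; exact hx
    · intro hv; exact ⟨⟨v, Or.inl hv⟩, hv, rfl⟩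
  have himg2 : (fun x : ↥(A ∪ B) => (x : V)) '' {x : ↥(A ∪ B) | (x : V) ∈ B} = B := by
    ext v; constructor
    · rintro ⟨x, hx, rfl⟩; exact hx
    · intro hv; exact ⟨⟨v, Or.inr hv⟩, hv, rfl⟩
  have hst : Disjoint {x : ↥(A ∪ B) | (x : V) ∈ A} {x : ↥(A ∪ B) | (x : V) ∈ B} := by
    rw [Set.disjoint_left]
    intro x hxA hxB
    exact hAB.ne_of_mem hxA hxB rfl
  have := h.disjoint_span_image hst
  rwa [himg1, himg2] at this

lemma li_pair_set {x y : V} (h : ∀ s t : F, s • x + t • y = 0 → s = 0 ∧ t = 0) :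
    LinearIndependent F ((↑) : ({x, y} : Set V) → V) := by
  have hx : x ≠ 0 := fun h0 => one_ne_zero ((h 1 0 (by simp [h0])).1)
  have hy : y ≠ 0 := fun h0 => one_ne_zero ((h 0 1 (by simp [h0])).2)
  have hxy : x ≠ y := by
    intro h0
    have := (h 1 (-1) (by rw [h0]; simp)).1
    exact one_ne_zero this
  have hxs : x ∉ ({y} : Set V) := by simpa using hxy
  rw [show ({x, y} : Set V) = insert x {y} from rfl]
  refine (linearIndepOn_id_insert hxs).mpr ⟨(linearIndepOn_singleton_iff F (v := id)).mpr hy, ?_⟩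
  intro hmem
  rw [mem_span_singleton] at hmem
  obtain ⟨c, rfl⟩ := hmem
  have := (h 1 (-c) (by simp)).1
  exact one_ne_zero this

end LA

lemma range_fin3 {β : Type*} (a b c : β) : Set.range ![a,b,c] = {a,b,c} := by
  ext v
  constructor
  · rintro ⟨i, rfl⟩
    fin_cases i <;> simp
  · rintro (rfl | rfl | rfl)
    exacts [⟨0, rfl⟩, ⟨1, rfl⟩, ⟨2, rfl⟩]

section Shared
variable {F : Type} [Field F] [Fintype F] {n : ℕ}
open Submodule

set_option maxHeartbeats 1000000 in
lemma shared (M : Matroid α) (e : α) (f : α → Fin n → F) (Fl : Set α)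
    (he : e ∈ M.E)
    (hf1 : ∀ I ⊆ (delete M {e}).E, ((delete M {e}).Indep I ↔
      LinearIndependent F (fun x : I => f x)))
    (hinj : Set.InjOn f (delete M {e}).E)
    (hf3 : ∀ v : Fin n → F, v ≠ 0 → ∃ x ∈ (delete M {e}).E, ∃ c : F, c ≠ 0 ∧ v = c • f x)
    (hFl : Fl ⊆ (delete M {e}).E)
    (hsp : e ∈ M.closure Fl)
    (hmin : ∀ F' : Set α, (delete M {e}).IsFlat F' → e ∈ M.closure F' → Fl ⊆ F')
    (X' : Set α) (hX' : X' ⊆ M.E \ {e})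
    (u : Fin 3 → (Fin n → F)) (hu : LinearIndependent F u)
    (hSli : LinearIndependent F ((↑) : ↥(f '' X' ∪ Set.range u) → (Fin n → F)))
    (hdisj : Disjoint (f '' X') (Set.range u))
    (hC1 : span F (f '' Fl) ≤ span F (f '' X' ∪ Set.range u))
    (ι : Type) [Fintype ι] (l : ι → Fin 3 → F)
    (hl : ∀ i j : ι, i ≠ j → ∀ s t : F, (∀ k, s * l i k + t * l j k = 0) → s = 0 ∧ t = 0)
    (hD : ∀ i j : ι, ¬ (span F (f '' Fl) ≤
      span F (f '' X' ∪ {∑ k, l i k • u k, ∑ k, l j k • u k})))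
    (hcard : 2 ≤ Fintype.card ι) :
    HasUnifLineMinor (contract M {e}) (Fintype.card ι) := by
  classical
  set U := span F (f '' Fl) with hU
  set vec : ι → (Fin n → F) := fun i => ∑ k, l i k • u k with hvec
  have huiff := Fintype.linearIndependent_iff.mp hu
  -- each l i is nonzero, hence vec i ≠ 0
  have hlne : ∀ i : ι, l i ≠ 0 := by
    intro i hli0
    obtain ⟨j, hj⟩ := Fintype.exists_ne_of_one_lt_card hcard i
    have := (hl j i hj 0 1 (by intro k; simp [hli0])).2
    exact one_ne_zero this
  have hvne : ∀ i, vec i ≠ 0 := by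
    intro i h0
    refine hlne i (funext fun k => ?_)
    exact huiff (l i) h0 k
  -- choose representatives
  have hch : ∀ i : ι, ∃ x ∈ (delete M {e}).E, ∃ c : F, c ≠ 0 ∧ vec i = c • f x :=
    fun i => hf3 (vec i) (hvne i)
  choose z hzE c hc0 hzc using hch
  have hvz : ∀ i, f (z i) = (c i)⁻¹ • vec i := by
    intro i
    rw [hzc i, smul_smul, inv_mul_cancel₀ (hc0 i), one_smul]
  have hvecspan : ∀ i, vec i ∈ span F (Set.range u) := by
    intro i
    exact Submodule.sum_mem _ fun k _ => smul_mem _ _ (subset_span (Set.mem_range_self k))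
  have hfzspan : ∀ i, f (z i) ∈ span F (Set.range u) := by
    intro i; rw [hvz i]; exact smul_mem _ _ (hvecspan i)
  have hfzne : ∀ i, f (z i) ≠ 0 := by
    intro i
    rw [hvz i]
    exact smul_ne_zero (inv_ne_zero (hc0 i)) (hvne i)
  -- span of singletons
  have hspanv : ∀ i, (span F {f (z i)}) = span F {vec i} := by
    intro i
    rw [hvz i]
    exact span_singleton_smul_eq (IsUnit.mk0 _ (inv_ne_zero (hc0 i))) _
  -- span disjointness
  have hSpanDisj : Disjoint (span F (f '' X')) (span F (Set.range u)) :=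
    disjoint_span_of_li_union hSli hdisj
  have hX'li : LinearIndependent F ((↑) : ↥(f '' X') → (Fin n → F)) :=
    LinearIndepOn.mono (v := id) hSli subset_union_left
  -- pairwise li of f (z i)
  have hpair : ∀ i j : ι, i ≠ j → ∀ s t : F, s • f (z i) + t • f (z j) = 0 → s = 0 ∧ t = 0 := by
    intro i j hij s t hst
    have hexp : s • f (z i) + t • f (z j)
        = ∑ k, ((s * (c i)⁻¹) * l i k + (t * (c j)⁻¹) * l j k) • u k := by
      rw [hvz i, hvz j, smul_smul, smul_smul, hvec]
      simp only [Finset.smul_sum, smul_smul, ← Finset.sum_add_distrib, add_smul, mul_assoc]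
    rw [hexp] at hst
    have hcoef : ∀ k, (s * (c i)⁻¹) * l i k + (t * (c j)⁻¹) * l j k = 0 := by
      have := huiff (fun k => (s * (c i)⁻¹) * l i k + (t * (c j)⁻¹) * l j k) hst
      exact this
    obtain ⟨h1, h2⟩ := hl i j hij _ _ hcoef
    constructor
    · rcases mul_eq_zero.mp h1 with h | h
      · exact h
      · exact absurd h (inv_ne_zero (hc0 i))
    · rcases mul_eq_zero.mp h2 with h | h
      · exact h
      · exact absurd h (inv_ne_zero (hc0 j))
  have hvne2 : ∀ i j : ι, i ≠ j → f (z i) ≠ f (z j) := by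
    intro i j hij h0
    have := (hpair i j hij 1 (-1) (by rw [h0]; simp)).1
    exact one_ne_zero this
  have hzinj : Function.Injective z := by
    intro i j hz
    by_contra hij
    exact hvne2 i j hij (by rw [hz])
  -- z i is not in X'
  have hzX' : ∀ i, z i ∉ X' := by
    intro i hzi
    have h1 : f (z i) ∈ span F (f '' X') := subset_span (mem_image_of_mem f hzi)
    exact hfzne i (disjoint_def.mp hSpanDisj _ h1 (hfzspan i))
  set T := Set.range z with hT
  have hTE : T ⊆ M.E \ insert e X' := by
    rintro t ⟨i, rfl⟩
    have h1 : z i ∈ M.E \ {e} := hzE i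
    exact ⟨h1.1, fun hmem => by
      rcases hmem with h | h
      · exact h1.2 h
      · exact hzX' i h⟩
  have hTenc : T.encard = (Fintype.card ι : ℕ) := by
    rw [hT, ← Set.image_univ, Set.InjOn.encard_image (hzinj.injOn), Set.encard_univ,
      ENat.card_eq_coe_fintype_card]
  -- the span rewriting for L1 conditions
  have hspan_un : ∀ i j : ι, span F (f '' X' ∪ {f (z i), f (z j)})
      = span F (f '' X' ∪ {vec i, vec j}) := by
    intro i j
    rw [span_union, span_union]
    congr 1
    rw [show ({f (z i), f (z j)} : Set (Fin n → F)) = {f (z i)} ∪ {f (z j)} by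
        rw [Set.singleton_union],
      show ({vec i, vec j} : Set (Fin n → F)) = {vec i} ∪ {vec j} by rw [Set.singleton_union],
      span_union, span_union, hspanv i, hspanv j]
  have hspan_un1 : ∀ i : ι, span F (f '' X' ∪ {f (z i)}) = span F (f '' X' ∪ {vec i}) := by
    intro i
    rw [span_union, span_union, hspanv i]
  -- linear independence of unions
  have hliun : ∀ s : Set (Fin n → F), LinearIndependent F ((↑) : ↥s → (Fin n → F)) →
      s ⊆ span F (Set.range u) →
      LinearIndependent F ((↑) : ↥(f '' X' ∪ s) → (Fin n → F)) := by
    intro s hs hssub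
    exact LinearIndepOn.id_union hX'li hs (hSpanDisj.mono_right (span_le.mpr hssub))
  -- W1
  have W1 : ∀ t ∈ T, M.Indep (insert e (X' ∪ {t})) := by
    rintro t ⟨i, rfl⟩
    have hsub : X' ∪ {z i} ⊆ M.E \ {e} := union_subset hX' (by have h : z i ∈ M.E \ {e} := hzE i; simpa using h)
    rw [insert_e_indep_iff M e f Fl he hf1 hinj hFl hsp hmin hsub]
    constructor
    · rw [image_union, image_singleton]
      exact hliun _ ((linearIndepOn_singleton_iff F (v := id)).mpr (hfzne i)) (by simpa using hfzspan i)
    · rw [image_union, image_singleton, hspan_un1 i]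
      have := hD i i
      rwa [Set.pair_eq_singleton] at this
  -- W2
  have W2 : ∀ t ∈ T, ∀ s ∈ T, t ≠ s → M.Indep (insert e (X' ∪ {t, s})) := by
    rintro t ⟨i, rfl⟩ s ⟨j, rfl⟩ hts
    have hij : i ≠ j := fun h => hts (by rw [h])
    have hsub : X' ∪ {z i, z j} ⊆ M.E \ {e} := union_subset hX'
      (by rintro x (rfl | rfl); exacts [hzE i, hzE j])
    rw [insert_e_indep_iff M e f Fl he hf1 hinj hFl hsp hmin hsub]
    constructor
    · rw [image_union, Set.image_pair]
      refine hliun _ (li_pair_set (hpair i j hij)) ?_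
      rintro x (rfl | rfl); exacts [hfzspan i, hfzspan j]
    · rw [image_union, Set.image_pair, hspan_un i j]
      exact hD i j
  -- W4
  have W4 : ∀ x ∈ T, ∀ y ∈ T, ∀ w ∈ T, x ≠ y → x ≠ w → y ≠ w →
      ¬ M.Indep (insert e (X' ∪ {x, y, w})) := by
    rintro x ⟨i, rfl⟩ y ⟨j, rfl⟩ w ⟨k, rfl⟩ hxy hxw hyw hind
    have hij : i ≠ j := fun h => hxy (by rw [h])
    have hik : i ≠ k := fun h => hxw (by rw [h])
    have hjk : j ≠ k := fun h => hyw (by rw [h])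
    have hsub : X' ∪ {z i, z j, z k} ⊆ M.E \ {e} := union_subset hX'
      (by rintro x (rfl | rfl | rfl); exacts [hzE i, hzE j, hzE k])
    rw [insert_e_indep_iff M e f Fl he hf1 hinj hFl hsp hmin hsub] at hind
    obtain ⟨hli, hnsp⟩ := hind
    have himg : f '' (X' ∪ {z i, z j, z k}) = f '' X' ∪ {f (z i), f (z j), f (z k)} := by
      rw [image_union]
      congr 1
      rw [Set.image_insert_eq, Set.image_pair]
    rw [himg] at hli hnsp
    -- the three vectors are linearly independent
    have htri : LinearIndependent F ((↑) : ↥({f (z i), f (z j), f (z k)} : Set (Fin n → F))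
        → (Fin n → F)) := LinearIndepOn.mono (v := id) hli subset_union_right
    have htrifam : LinearIndependent F ![f (z i), f (z j), f (z k)] := by
      apply LinearIndependent.of_linearIndepOn_id_range
      · intro a b hab
        fin_cases a <;> fin_cases b <;> simp at hab ⊢ <;>
          first
          | rfl
          | exact absurd hab (hvne2 _ _ hij) | exact absurd hab (hvne2 _ _ hij.symm)
          | exact absurd hab (hvne2 _ _ hik) | exact absurd hab (hvne2 _ _ hik.symm)
          | exact absurd hab (hvne2 _ _ hjk) | exact absurd hab (hvne2 _ _ hjk.symm)
      · rwa [range_fin3]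
    -- their span equals span (range u)
    have hle3 : span F (Set.range ![f (z i), f (z j), f (z k)]) ≤ span F (Set.range u) := by
      rw [span_le]
      rintro v ⟨a, rfl⟩
      fin_cases a <;> simp <;> exact hfzspan _
    have hfr1 : Module.finrank F (span F (Set.range ![f (z i), f (z j), f (z k)])) = 3 := by
      rw [finrank_span_eq_card htrifam, Fintype.card_fin]
    have hfr2 : Module.finrank F (span F (Set.range u)) = 3 := by
      rw [finrank_span_eq_card hu, Fintype.card_fin]
    have hspan3 : span F (Set.range ![f (z i), f (z j), f (z k)]) = span F (Set.range u) :=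
      Submodule.eq_of_le_of_finrank_le hle3 (by rw [hfr1, hfr2])
    -- hence U is inside the span, contradiction
    apply hnsp
    calc U ≤ span F (f '' X' ∪ Set.range u) := hC1
    _ = span F (f '' X') ⊔ span F (Set.range u) := span_union _ _
    _ = span F (f '' X') ⊔ span F (Set.range ![f (z i), f (z j), f (z k)]) := by rw [hspan3]
    _ = span F (f '' X' ∪ Set.range ![f (z i), f (z j), f (z k)]) := (span_union _ _).symm
    _ = span F (f '' X' ∪ {f (z i), f (z j), f (z k)}) := by
        rw [range_fin3]
  exact core M e X' T (Fintype.card ι) hTE hTenc hcard W1 W2 W4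

end Shared

section Cases
variable {F : Type} [Field F] [Fintype F] {n : ℕ}
open Submodule

set_option linter.unusedSectionVars false
set_option maxHeartbeats 1000000

lemma exists_indep_of_le_eRk (M : Matroid α) (X : Set α) (k : ℕ) (hk : 1 ≤ k)
    (h : (k : ℕ∞) ≤ eRk M X) : ∃ I, M.Indep I ∧ I ⊆ X ∧ (k : ℕ∞) ≤ I.encard := by
  by_contra h'
  push_neg at h'
  have hub : eRk M X ≤ ((k - 1 : ℕ) : ℕ∞) := by
    rw [eRk]
    refine iSup₂_le fun I hI => ?_
    have hlt : I.encard < (k : ℕ∞) := h' I hI.1 hI.2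
    have hne : I.encard ≠ ⊤ := hlt.ne_top
    lift I.encard to ℕ using hne with m hm
    have hmk : m < k := by exact_mod_cast hlt
    have : m ≤ k - 1 := by omega
    exact_mod_cast this
  have := h.trans hub
  have : k ≤ k - 1 := by exact_mod_cast this
  omega

lemma li_triple_of_indep (P : Matroid α) (f : α → Fin n → F)
    (hf1 : ∀ I ⊆ P.E, (P.Indep I ↔ LinearIndependent F (fun x : I => f x)))
    (hinj : Set.InjOn f P.E) {x y z : α} (hxy : x ≠ y) (hxz : x ≠ z) (hyz : y ≠ z)
    (hsub : ({x, y, z} : Set α) ⊆ P.E) (hind : P.Indep {x, y, z}) :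
    LinearIndependent F ![f x, f y, f z] := by
  have himg : f '' ({x, y, z} : Set α) = {f x, f y, f z} := by
    rw [Set.image_insert_eq, Set.image_pair]
  have hset := (indep_iff_li P f hf1 hinj hsub).mp hind
  rw [himg] at hset
  have hxE : x ∈ P.E := hsub (by simp)
  have hyE : y ∈ P.E := hsub (by simp)
  have hzE : z ∈ P.E := hsub (by simp)
  have hfxy : f x ≠ f y := fun h => hxy (hinj hxE hyE h)
  have hfxz : f x ≠ f z := fun h => hxz (hinj hxE hzE h)
  have hfyz : f y ≠ f z := fun h => hyz (hinj hyE hzE h)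
  apply LinearIndependent.of_linearIndepOn_id_range
  · intro a b hab
    fin_cases a <;> fin_cases b <;> simp at hab ⊢ <;>
      first
      | rfl
      | exact absurd hab hfxy | exact absurd hab hfxy.symm
      | exact absurd hab hfxz | exact absurd hab hfxz.symm
      | exact absurd hab hfyz | exact absurd hab hfyz.symm
  · rwa [range_fin3]

lemma caseB (M : Matroid α) (e : α) (f : α → Fin n → F) (Fl : Set α)
    (he : e ∈ M.E)
    (hf1 : ∀ I ⊆ (delete M {e}).E, ((delete M {e}).Indep I ↔
      LinearIndependent F (fun x : I => f x)))
    (hinj : Set.InjOn f (delete M {e}).E)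
    (hf3 : ∀ v : Fin n → F, v ≠ 0 → ∃ x ∈ (delete M {e}).E, ∃ c : F, c ≠ 0 ∧ v = c • f x)
    (hFl : Fl ⊆ (delete M {e}).E)
    (hsp : e ∈ M.closure Fl)
    (hmin : ∀ F' : Set α, (delete M {e}).IsFlat F' → e ∈ M.closure F' → Fl ⊆ F')
    (h3 : (3 : ℕ∞) ≤ eRk (delete M {e}) Fl)
    (ι : Type) [Fintype ι] (l : ι → Fin 3 → F)
    (hl : ∀ i j : ι, i ≠ j → ∀ s t : F, (∀ k, s * l i k + t * l j k = 0) → s = 0 ∧ t = 0)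
    (hcard : 2 ≤ Fintype.card ι) :
    HasUnifLineMinor (contract M {e}) (Fintype.card ι) := by
  classical
  set P := delete M {e} with hP
  obtain ⟨I, hIind, hIFl, hI3⟩ := exists_indep_of_le_eRk P Fl 3 (by omega) h3
  obtain ⟨S0, hS0I, hS03⟩ := Set.exists_subset_encard_eq hI3
  obtain ⟨x, y, z, hxy, hxz, hyz, rfl⟩ := Set.encard_eq_three.mp hS03
  have hsubFl : ({x, y, z} : Set α) ⊆ Fl := hS0I.trans hIFl
  have hsubE : ({x, y, z} : Set α) ⊆ P.E := hsubFl.trans hFl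
  have hu : LinearIndependent F ![f x, f y, f z] :=
    li_triple_of_indep P f hf1 hinj hxy hxz hyz hsubE (hIind.subset hS0I)
  set u : Fin 3 → (Fin n → F) := ![f x, f y, f z] with hudef
  have hru : Set.range u = {f x, f y, f z} := range_fin3 _ _ _
  have hst : Set.range u ⊆ f '' Fl := by
    rw [hru]
    rintro v (rfl | rfl | rfl)
    · exact mem_image_of_mem f (hsubFl (by simp))
    · exact mem_image_of_mem f (hsubFl (by simp))
    · exact mem_image_of_mem f (hsubFl (by simp))
  obtain ⟨b, hbt, hsb, htb, hbli⟩ :=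
    exists_linearIndepOn_id_extension hu.linearIndepOn_id hst
  have hbfin : b.Finite := LinearIndependent.set_finite_of_isNoetherian hbli
  -- preimage choice
  set pk : (Fin n → F) → α := fun v => if h : ∃ q ∈ Fl, f q = v then h.choose else e with hpkdef
  have hpk : ∀ v, (h : ∃ q ∈ Fl, f q = v) → pk v ∈ Fl ∧ f (pk v) = v := by
    intro v h
    rw [hpkdef]
    simp only [dif_pos h]
    exact ⟨h.choose_spec.1, h.choose_spec.2⟩
  set X' : Set α := pk '' (b \ Set.range u) with hX'def
  have hfX' : f '' X' = b \ Set.range u := by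
    rw [hX'def]
    ext v
    constructor
    · rintro ⟨q, ⟨w, hw, rfl⟩, rfl⟩
      rw [(hpk w (hbt hw.1)).2]
      exact hw
    · intro hv
      exact ⟨pk v, ⟨v, hv, rfl⟩, (hpk v (hbt hv.1)).2⟩
  have hX'sub : X' ⊆ M.E \ {e} := by
    rintro q ⟨w, hw, rfl⟩
    exact (hpk w (hbt hw.1)).1 |> hFl
  have hsplit : f '' X' ∪ Set.range u = b := by
    rw [hfX', Set.diff_union_of_subset hsb]
  have hUeq : span F (f '' Fl) = span F b :=
    le_antisymm (span_le.mpr htb) (span_le.mpr (hbt.trans subset_span))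
  -- cardinalities
  have hrufin : (Set.range u).Finite := Set.finite_range u
  have hru3 : (Set.range u).ncard = 3 := by
    rw [← Set.image_univ, Set.ncard_image_of_injective _ hu.injective, Set.ncard_univ,
      Nat.card_eq_fintype_card, Fintype.card_fin]
  have hbcard : b.ncard = (b \ Set.range u).ncard + 3 := by
    have h1 : ((b \ Set.range u) ∪ Set.range u).ncard
        = (b \ Set.range u).ncard + (Set.range u).ncard :=
      Set.ncard_union_eq Set.disjoint_sdiff_left hbfin.diff hrufin
    rw [Set.diff_union_of_subset hsb] at h1
    rw [h1, hru3]
  have hfrU : Module.finrank F (span F (f '' Fl)) = b.ncard := by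
    haveI := hbfin.fintype
    rw [hUeq, finrank_span_set_eq_card hbli, Set.ncard_eq_toFinset_card']
  refine shared M e f Fl he hf1 hinj hf3 hFl hsp hmin X' hX'sub u hu
    (by rw [hsplit]; exact hbli) (by rw [hfX']; exact Set.disjoint_sdiff_left)
    (by rw [hsplit]; exact hUeq.le) ι l hl ?_ hcard
  -- hD
  intro i j hle
  set A : Set (Fin n → F) := f '' X' ∪ {∑ k, l i k • u k, ∑ k, l j k • u k} with hAdef
  have hAfin : A.Finite := hbfin.diff.union (Set.toFinite _) |>.subset (by
    rw [hAdef, hfX'])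
  have hAcard : A.ncard ≤ (b \ Set.range u).ncard + 2 := by
    rw [hAdef, hfX']
    refine (Set.ncard_union_le _ _).trans ?_
    gcongr
    exact (Set.ncard_insert_le _ _).trans (by simp)
  have hfrA : Module.finrank F (span F A) ≤ (b \ Set.range u).ncard + 2 := by
    haveI := hAfin.fintype
    refine (finrank_span_le_card A).trans ?_
    rw [← Set.ncard_eq_toFinset_card']
    exact hAcard
  have hmono := Submodule.finrank_mono hle
  rw [hfrU, hbcard] at hmono
  omega

end Cases

section CaseA
variable {F : Type} [Field F] [Fintype F] {n : ℕ}
open Submodule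

set_option linter.unusedSectionVars false
set_option maxHeartbeats 1000000

def lA (F : Type) [Field F] : (F × F) ⊕ Unit → Fin 3 → F :=
  Sum.elim (fun p => ![1, p.1, p.2]) (fun _ => ![0, 1, 0])

def lB (F : Type) [Field F] : (F × F) ⊕ (F ⊕ Unit) → Fin 3 → F :=
  Sum.elim (fun p => ![1, p.1, p.2]) (Sum.elim (fun c => ![0, 1, c]) (fun _ => ![0, 0, 1]))

lemma hlA : ∀ i j : (F × F) ⊕ Unit, i ≠ j →
    ∀ s t : F, (∀ k, s * lA F i k + t * lA F j k = 0) → s = 0 ∧ t = 0 := by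
  have ev : ∀ (x y z : F) (s : F), s * lA F (Sum.inl (x, y)) 0 = s ∧
      True := fun _ _ _ _ => ⟨by simp [lA], trivial⟩
  rintro (⟨a, b⟩ | ⟨⟩) (⟨a', b'⟩ | ⟨⟩) hij s t h
  · have h0 := h 0; have h1 := h 1; have h2 := h 2
    simp only [lA, Sum.elim_inl, Matrix.cons_val_zero, Matrix.cons_val_one, Matrix.cons_val_two,
      Matrix.head_cons, Matrix.tail_cons, mul_one] at h0 h1 h2
    rcases eq_or_ne s 0 with hs | hs
    · subst hs
      refine ⟨rfl, by linear_combination h0⟩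
    · exfalso
      have hA : a = a' := mul_left_cancel₀ hs (by linear_combination h1 - a' * h0)
      have hB : b = b' := mul_left_cancel₀ hs (by linear_combination h2 - b' * h0)
      exact hij (by rw [hA, hB])
  · have h0 := h 0; have h1 := h 1
    simp only [lA, Sum.elim_inl, Sum.elim_inr, Matrix.cons_val_zero, Matrix.cons_val_one,
      Matrix.cons_val_two, Matrix.head_cons, Matrix.tail_cons, mul_one, mul_zero, add_zero,
      zero_add] at h0 h1
    exact ⟨h0, by linear_combination h1 - a * h0⟩
  · have h0 := h 0; have h1 := h 1
    simp only [lA, Sum.elim_inl, Sum.elim_inr, Matrix.cons_val_zero, Matrix.cons_val_one,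
      Matrix.cons_val_two, Matrix.head_cons, Matrix.tail_cons, mul_one, mul_zero, add_zero,
      zero_add] at h0 h1
    exact ⟨by linear_combination h1 - a' * h0, h0⟩
  · exact absurd rfl hij

lemma hlB : ∀ i j : (F × F) ⊕ (F ⊕ Unit), i ≠ j →
    ∀ s t : F, (∀ k, s * lB F i k + t * lB F j k = 0) → s = 0 ∧ t = 0 := by
  rintro (⟨a, b⟩ | (c | ⟨⟩)) (⟨a', b'⟩ | (c' | ⟨⟩)) hij s t h <;>
    [skip; skip; skip; skip; skip; skip; skip; skip; exact absurd rfl hij] <;>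
  · have h0 := h 0; have h1 := h 1; have h2 := h 2
    simp only [lB, Sum.elim_inl, Sum.elim_inr, Matrix.cons_val_zero, Matrix.cons_val_one,
      Matrix.cons_val_two, Matrix.head_cons, Matrix.tail_cons, mul_one, mul_zero, add_zero,
      zero_add] at h0 h1 h2
    first
    | -- inl inl
      (rcases eq_or_ne s 0 with hs | hs
       · subst hs
         refine ⟨rfl, by linear_combination h0⟩
       · exfalso
         have hA : a = a' := mul_left_cancel₀ hs (by linear_combination h1 - a' * h0)
         have hB : b = b' := mul_left_cancel₀ hs (by linear_combination h2 - b' * h0)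
         exact hij (by rw [hA, hB]))
    | -- inl, inr inl
      exact ⟨h0, by linear_combination h1 - a * h0⟩
    | -- inl, inr inr
      exact ⟨h0, by linear_combination h2 - b * h0⟩
    | -- inr inl, inl
      exact ⟨by linear_combination h1 - a' * h0, h0⟩
    | -- inr inl, inr inl : c ≠ c'
      (rcases eq_or_ne s 0 with hs | hs
       · subst hs
         refine ⟨rfl, by linear_combination h1⟩
       · exfalso
         have hC : c = c' := mul_left_cancel₀ hs (by linear_combination h2 - c' * h1)
         exact hij (by rw [hC]))
    | -- inr inl, inr inr
      exact ⟨h1, by linear_combination h2 - c * h1⟩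
    | -- inr inr, inl
      exact ⟨by linear_combination h2 - b' * h0, h0⟩
    | -- inr inr, inr inl
      exact ⟨by linear_combination h2 - c' * h1, h1⟩

lemma caseA (M : Matroid α) (e : α) (f : α → Fin n → F) (Fl : Set α)
    (he : e ∈ M.E) (hn : 3 ≤ n)
    (hf1 : ∀ I ⊆ (delete M {e}).E, ((delete M {e}).Indep I ↔
      LinearIndependent F (fun x : I => f x)))
    (hinj : Set.InjOn f (delete M {e}).E)
    (hf3 : ∀ v : Fin n → F, v ≠ 0 → ∃ x ∈ (delete M {e}).E, ∃ c : F, c ≠ 0 ∧ v = c • f x)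
    (hFl : Fl ⊆ (delete M {e}).E)
    (hsp : e ∈ M.closure Fl)
    (hmin : ∀ F' : Set α, (delete M {e}).IsFlat F' → e ∈ M.closure F' → Fl ⊆ F')
    (h2 : (2 : ℕ∞) ≤ eRk (delete M {e}) Fl)
    (hnot3 : ¬ ((3 : ℕ∞) ≤ eRk (delete M {e}) Fl)) :
    HasUnifLineMinor (contract M {e}) (Fintype.card ((F × F) ⊕ Unit)) := by
  classical
  set P := delete M {e} with hPdef
  obtain ⟨I, hIind, hIFl, hI2⟩ := exists_indep_of_le_eRk P Fl 2 (by omega) h2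
  obtain ⟨S0, hS0I, hS02⟩ := Set.exists_subset_encard_eq hI2
  obtain ⟨x, y, hxy, rfl⟩ := Set.encard_eq_two.mp hS02
  have hsubFl : ({x, y} : Set α) ⊆ Fl := hS0I.trans hIFl
  have hsubE : ({x, y} : Set α) ⊆ P.E := hsubFl.trans hFl
  have hxE : x ∈ P.E := hsubE (by simp)
  have hyE : y ∈ P.E := hsubE (by simp)
  have hfxy : f x ≠ f y := fun h => hxy (hinj hxE hyE h)
  have hindxy : P.Indep {x, y} := hIind.subset hS0I
  have hpairli : LinearIndependent F ((↑) : ({f x, f y} : Set (Fin n → F)) → (Fin n → F)) := by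
    have := (indep_iff_li P f hf1 hinj hsubE).mp hindxy
    rwa [Set.image_pair] at this
  -- every element of Fl is spanned by f x, f y
  have hFlspan : ∀ q ∈ Fl, f q ∈ span F ({f x, f y} : Set (Fin n → F)) := by
    intro q hq
    by_contra hqs
    have hqE : q ∈ P.E := hFl hq
    have hqx : q ∉ ({x, y} : Set α) := by
      rintro (rfl | rfl)
      · exact hqs (subset_span (by simp))
      · exact hqs (subset_span (by simp))
    have hfq : f q ∉ ({f x, f y} : Set (Fin n → F)) := by
      rintro (h | h)
      · exact hqs (h ▸ subset_span (by simp))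
      · exact hqs (h ▸ subset_span (by simp))
    have hliq : LinearIndependent F
        ((↑) : ↥(insert (f q) ({f x, f y} : Set (Fin n → F))) → (Fin n → F)) :=
      (linearIndepOn_id_insert hfq).mpr ⟨hpairli, hqs⟩
    have himg : f '' ({q, x, y} : Set α) = insert (f q) ({f x, f y} : Set (Fin n → F)) := by
      rw [Set.image_insert_eq, Set.image_pair]
    have hqind : P.Indep {q, x, y} := by
      rw [indep_iff_li P f hf1 hinj (insert_subset hqE hsubE), himg]
      exact hliq
    have henc : ({q, x, y} : Set α).encard = 3 := by
      rw [Set.encard_eq_three]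
      exact ⟨q, x, y, by rintro rfl; exact hqx (by simp), by rintro rfl; exact hqx (by simp),
        hxy, rfl⟩
    apply hnot3
    rw [eRk]
    calc (3 : ℕ∞) = ({q, x, y} : Set α).encard := henc.symm
      _ ≤ _ := le_iSup₂ (f := fun (J : Set α) (_ : J ∈ {J : Set α | P.Indep J ∧ J ⊆ Fl}) =>
          J.encard) ({q, x, y}) ⟨hqind, insert_subset hq hsubFl⟩
  have hUeq : span F (f '' Fl) = span F ({f x, f y} : Set (Fin n → F)) := by
    refine le_antisymm (span_le.mpr ?_) (span_mono ?_)
    · rintro v ⟨q, hq, rfl⟩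
      exact hFlspan q hq
    · rintro v (rfl | rfl)
      · exact mem_image_of_mem f (hsubFl (by simp))
      · exact mem_image_of_mem f (hsubFl (by simp))
  have hfrU : Module.finrank F (span F ({f x, f y} : Set (Fin n → F))) = 2 := by
    haveI : Fintype ({f x, f y} : Set (Fin n → F)) := (Set.toFinite _).fintype
    rw [finrank_span_set_eq_card hpairli, ← Set.ncard_eq_toFinset_card', Set.ncard_pair hfxy]
  -- a vector outside U
  have hUtop : span F ({f x, f y} : Set (Fin n → F)) ≠ ⊤ := by
    intro h
    have := hfrU
    rw [h, finrank_top, Module.finrank_pi] at this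
    simp at this
    omega
  have hUlt : span F ({f x, f y} : Set (Fin n → F)) < ⊤ := lt_top_iff_ne_top.mpr hUtop
  obtain ⟨w, -, hw⟩ := SetLike.exists_of_lt hUlt
  set u : Fin 3 → (Fin n → F) := ![w, f x, f y] with hudef
  have hru : Set.range u = {w, f x, f y} := range_fin3 _ _ _
  have hwx : w ≠ f x := fun h => hw (h ▸ subset_span (by simp))
  have hwy : w ≠ f y := fun h => hw (h ▸ subset_span (by simp))
  have huli : LinearIndependent F u := by
    have hset : LinearIndependent F
        ((↑) : ↥(insert w ({f x, f y} : Set (Fin n → F))) → (Fin n → F)) :=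
      (linearIndepOn_id_insert (by rintro (h | h); exacts [hwx h, hwy h])).mpr ⟨hpairli, hw⟩
    apply LinearIndependent.of_linearIndepOn_id_range
    · intro a b hab
      fin_cases a <;> fin_cases b <;> simp at hab ⊢ <;>
        first
        | rfl
        | exact absurd hab hwx | exact absurd hab hwx.symm
        | exact absurd hab hwy | exact absurd hab hwy.symm
        | exact absurd hab hfxy | exact absurd hab hfxy.symm
    · rwa [hru]
  have hxMe : ({x, y} : Set α) ⊆ M.E \ {e} := hsubE
  -- apply shared with X' = ∅
  have hcard : 2 ≤ Fintype.card ((F × F) ⊕ Unit) := by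
    have hF : 1 ≤ Fintype.card F := Fintype.card_pos
    rw [Fintype.card_sum, Fintype.card_prod, Fintype.card_unit]
    nlinarith
  refine shared M e f Fl he hf1 hinj hf3 hFl hsp hmin ∅ (empty_subset _) u huli
    (by rw [Set.image_empty, Set.empty_union]; exact huli.linearIndepOn_id)
    (by rw [Set.image_empty]; exact Set.empty_disjoint _)
    (by rw [Set.image_empty, Set.empty_union, hUeq]
        exact span_mono (by rw [hru]; rintro v (rfl | rfl) <;> simp))
    ((F × F) ⊕ Unit) (lA F) hlA ?_ hcard
  -- hD
  have hvecmem : ∀ i : (F × F) ⊕ Unit, (∑ k, lA F i k • u k) ∈ span F (Set.range u) :=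
    fun i => Submodule.sum_mem _ fun k _ => smul_mem _ _ (subset_span (Set.mem_range_self k))
  have hfr3 : Module.finrank F (span F (Set.range u)) = 3 := by
    rw [finrank_span_eq_card huli, Fintype.card_fin]
  have hveinl : ∀ p : F × F, (∑ k, lA F (Sum.inl p) k • u k) = w + p.1 • f x + p.2 • f y := by
    intro p
    rw [Fin.sum_univ_three]
    simp [lA, hudef]
  have hveinr : ∀ t : Unit, (∑ k, lA F (Sum.inr t) k • u k) = f x := by
    intro t
    rw [Fin.sum_univ_three]
    simp [lA, hudef]
  -- main claim
  have claim : ∀ v₁ v₂ : Fin n → F, (∃ p : F × F, v₁ = w + p.1 • f x + p.2 • f y) →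
      ¬ (span F (f '' Fl) ≤ span F ({v₁, v₂} : Set (Fin n → F))) := by
    rintro v₁ v₂ ⟨p, rfl⟩ hle
    rw [hUeq] at hle
    set W := span F ({w + p.1 • f x + p.2 • f y, v₂} : Set (Fin n → F)) with hW
    have hfxW : f x ∈ W := hle (subset_span (by simp))
    have hfyW : f y ∈ W := hle (subset_span (by simp))
    have hv1W : w + p.1 • f x + p.2 • f y ∈ W := subset_span (by simp)
    have hwW : w ∈ W := by
      have : w = (w + p.1 • f x + p.2 • f y) - p.1 • f x - p.2 • f y := by abel
      rw [this]
      exact sub_mem (sub_mem hv1W (smul_mem _ _ hfxW)) (smul_mem _ _ hfyW)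
    have hleW : span F (Set.range u) ≤ W := by
      rw [span_le, hru]
      rintro v (rfl | rfl | rfl)
      exacts [hwW, hfxW, hfyW]
    have h3le : (3 : ℕ) ≤ Module.finrank F W := by
      rw [← hfr3]
      exact Submodule.finrank_mono hleW
    have hWle : Module.finrank F W ≤ 2 := by
      haveI : Fintype ({w + p.1 • f x + p.2 • f y, v₂} : Set (Fin n → F)) :=
        (Set.toFinite _).fintype
      refine (finrank_span_le_card _).trans ?_
      rw [← Set.ncard_eq_toFinset_card']
      exact (Set.ncard_insert_le _ _).trans (by simp)
    omega
  rintro (p | t) (p' | t') <;> rw [Set.image_empty, Set.empty_union] <;>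
    simp only [hveinl, hveinr]
  · exact claim _ _ ⟨p, rfl⟩
  · exact claim _ _ ⟨p, rfl⟩
  · rw [Set.pair_comm]
    exact claim _ _ ⟨p', rfl⟩
  · rw [Set.pair_eq_singleton]
    intro hle
    rw [hUeq] at hle
    have h2le : (2 : ℕ) ≤ Module.finrank F (span F ({f x} : Set (Fin n → F))) := by
      rw [← hfrU]
      exact Submodule.finrank_mono hle
    have : Module.finrank F (span F ({f x} : Set (Fin n → F))) ≤ 1 := by
      haveI : Fintype ({f x} : Set (Fin n → F)) := (Set.toFinite _).fintype
      refine (finrank_span_le_card _).trans ?_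
      rw [← Set.ncard_eq_toFinset_card']
      simp
    omega

end CaseA

/-- Let `M \ e ≅ PG(r(M)-1,q)` with `r(M) ≥ 3`, and let `Fl` be the unique minimal
flat of `M \ e` spanning `e`. If `r(Fl) ≥ 2` then `M/e` has a `U_{2,q²+1}`-minor,
and if `r(Fl) ≥ 3` then `M/e` has a `U_{2,q²+q+1}`-minor. -/
theorem statement_9 {α : Type*} (F : Type) [Field F] [Fintype F]
    (M : Matroid α) (e : α) (he : e ∈ M.E) (hr : 3 ≤ rank M)
    (hPG : IsPG (delete M {e}) F (rank M))
    (Fl : Set α) (hFl : (delete M {e}).IsFlat Fl) (hsp : e ∈ M.closure Fl)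
    (hmin : ∀ F' : Set α, (delete M {e}).IsFlat F' → e ∈ M.closure F' → Fl ⊆ F') :
    (2 ≤ eRk (delete M {e}) Fl →
      HasUnifLineMinor (contract M {e}) (Fintype.card F ^ 2 + 1)) ∧
    (3 ≤ eRk (delete M {e}) Fl →
      HasUnifLineMinor (contract M {e}) (Fintype.card F ^ 2 + Fintype.card F + 1)) := by
  classical
  obtain ⟨f, hf1, hf2, hf3⟩ := hPG
  have hinj : Set.InjOn f (delete M {e}).E := by
    intro a ha b hb hab
    exact hf2 a ha b hb 1 (by rw [one_smul, hab])
  have hFl' : Fl ⊆ (delete M {e}).E := hFl.subset_ground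
  have hcard1 : Fintype.card ((F × F) ⊕ Unit) = Fintype.card F ^ 2 + 1 := by
    rw [Fintype.card_sum, Fintype.card_prod, Fintype.card_unit, pow_two]
  have hcard2 : Fintype.card ((F × F) ⊕ (F ⊕ Unit))
      = Fintype.card F ^ 2 + Fintype.card F + 1 := by
    rw [Fintype.card_sum, Fintype.card_prod, Fintype.card_sum, Fintype.card_unit, pow_two]
    omega
  have hF : 1 ≤ Fintype.card F := Fintype.card_pos
  constructor
  · intro h2
    by_cases h3 : (3 : ℕ∞) ≤ eRk (delete M {e}) Fl
    · have := caseB M e f Fl he hf1 hinj hf3 hFl' hsp hmin h3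
        ((F × F) ⊕ Unit) (lA F) hlA (by rw [hcard1]; nlinarith)
      rwa [hcard1] at this
    · have := caseA M e f Fl he hr hf1 hinj hf3 hFl' hsp hmin h2 h3
      rwa [hcard1] at this
  · intro h3
    have := caseB M e f Fl he hf1 hinj hf3 hFl' hsp hmin h3
      ((F × F) ⊕ (F ⊕ Unit)) (lB F) hlB (by rw [hcard2]; nlinarith)
    rwa [hcard2] at this


end GrowthRate
end
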